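/- Fix b > −3/16 and set γ = 1 + (16/3)b (so γ > 0). Let ω > 0 and c = 2√ω. Then the function Φ(x) = ( 4c / ((c x)² + γ) )^{1/2} is a smooth, strictly positive, even function on ℝ, tends to 0 as |x| → ∞, and satisfies the ordinary differential equation −Φ''(x) + (c/2)·Φ(x)³ − (3/16)·γ·Φ(x)⁵ = 0 for all x ∈ ℝ. -/

import Mathlib

open MeasureTheory Real Filter

/-- The algebraic soliton profile of the derivative NLS after gauge transformation. -/
noncomputable def PhiA (γ c x : ℝ) : ℝ :=
  Real.sqrt (4 * c / ((c * x) ^ 2 + γ))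

lemma phiA_eq (γ c : ℝ) (hc : 0 ≤ c) : (fun x => PhiA γ c x)
    = fun x => Real.sqrt (4 * c) * (Real.sqrt ((c * x) ^ 2 + γ))⁻¹ := by
  funext x
  rw [PhiA, Real.sqrt_div (by linarith), div_eq_mul_inv]

lemma sqrt_hasDerivAt (γ c x : ℝ) (hg : (0:ℝ) < (c * x) ^ 2 + γ) :
    HasDerivAt (fun y : ℝ => Real.sqrt ((c * y) ^ 2 + γ))
      (c ^ 2 * x / Real.sqrt ((c * x) ^ 2 + γ)) x := by
  have h1 : HasDerivAt (fun y : ℝ => (c * y) ^ 2 + γ) (2 * (c * x) ^ 1 * c) x := by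
    simpa using (((hasDerivAt_id x).const_mul c).pow 2).add_const γ
  have := h1.sqrt hg.ne'
  have hS : Real.sqrt ((c * x) ^ 2 + γ) ≠ 0 := Real.sqrt_ne_zero'.mpr hg
  convert this using 1
  set S := Real.sqrt ((c * x) ^ 2 + γ) with hSdef
  field_simp

lemma phiA_deriv1 (γ c : ℝ) (hγ : 0 < γ) (hc : 0 ≤ c) (x : ℝ) :
    HasDerivAt (fun y => PhiA γ c y)
      (-(Real.sqrt (4 * c) * c ^ 2 * x) / (Real.sqrt ((c * x) ^ 2 + γ)) ^ 3) x := by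
  have hg : (0:ℝ) < (c * x) ^ 2 + γ := by positivity
  have hS : Real.sqrt ((c * x) ^ 2 + γ) ≠ 0 := Real.sqrt_ne_zero'.mpr hg
  have hS2 : Real.sqrt ((c * x) ^ 2 + γ) ^ 2 = (c * x) ^ 2 + γ := Real.sq_sqrt hg.le
  rw [phiA_eq γ c hc]
  have := ((sqrt_hasDerivAt γ c x hg).inv hS).const_mul (Real.sqrt (4 * c))
  refine this.congr_deriv ?_
  set S := Real.sqrt ((c * x) ^ 2 + γ) with hSdef
  set A := Real.sqrt (4 * c) with hAdef
  field_simp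

lemma phiA_deriv2 (γ c : ℝ) (hγ : 0 < γ) (x : ℝ) :
    HasDerivAt (fun y => -(Real.sqrt (4 * c) * c ^ 2 * y) / (Real.sqrt ((c * y) ^ 2 + γ)) ^ 3)
      (-(Real.sqrt (4 * c) * c ^ 2) / (Real.sqrt ((c * x) ^ 2 + γ)) ^ 3
        + 3 * Real.sqrt (4 * c) * c ^ 4 * x ^ 2 / (Real.sqrt ((c * x) ^ 2 + γ)) ^ 5) x := by
  have hg : (0:ℝ) < (c * x) ^ 2 + γ := by positivity
  have hS : Real.sqrt ((c * x) ^ 2 + γ) ≠ 0 := Real.sqrt_ne_zero'.mpr hg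
  have hS2 : Real.sqrt ((c * x) ^ 2 + γ) ^ 2 = (c * x) ^ 2 + γ := Real.sq_sqrt hg.le
  have hS3 : Real.sqrt ((c * x) ^ 2 + γ) ^ 3 ≠ 0 := pow_ne_zero _ hS
  have hpow : HasDerivAt (fun y : ℝ => (Real.sqrt ((c * y) ^ 2 + γ)) ^ 3)
      (3 * Real.sqrt ((c * x) ^ 2 + γ) ^ 2 * (c ^ 2 * x / Real.sqrt ((c * x) ^ 2 + γ))) x := by
    simpa [Pi.pow_def] using (sqrt_hasDerivAt γ c x hg).pow 3
  have hnum : HasDerivAt (fun y : ℝ => -(Real.sqrt (4 * c) * c ^ 2 * y))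
      (-(Real.sqrt (4 * c) * c ^ 2)) x := by
    simpa [Pi.neg_def] using ((hasDerivAt_id x).const_mul (Real.sqrt (4 * c) * c ^ 2)).neg
  have := hnum.div hpow hS3
  refine this.congr_deriv ?_
  set S := Real.sqrt ((c * x) ^ 2 + γ) with hSdef
  set A := Real.sqrt (4 * c) with hAdef
  field_simp
  ring

/-- Verification that the algebraic soliton profile (the borderline case `c = 2√ω`)
is smooth, positive, even, vanishes at infinity, and solves
`-Φ'' + (c/2)Φ³ - (3/16)γΦ⁵ = 0`. -/
theorem stmt_3 (b γ ω c : ℝ) (hb : -3 / 16 < b) (hγ : γ = 1 + 16 / 3 * b)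
    (hω : 0 < ω) (hc : c = 2 * Real.sqrt ω) :
    ContDiff ℝ (⊤ : ℕ∞) (fun x => PhiA γ c x) ∧
    (∀ x : ℝ, 0 < PhiA γ c x) ∧
    (∀ x : ℝ, PhiA γ c (-x) = PhiA γ c x) ∧
    Tendsto (fun x => PhiA γ c x) (cocompact ℝ) (nhds 0) ∧
    (∀ x : ℝ, -deriv (deriv (fun y => PhiA γ c y)) x
        + c / 2 * PhiA γ c x ^ 3 - 3 / 16 * γ * PhiA γ c x ^ 5 = 0) := by
  have hγ0 : 0 < γ := by rw [hγ]; linarith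
  have hc0 : 0 < c := by
    rw [hc]; have := Real.sqrt_pos.mpr hω; linarith
  have hg : ∀ x : ℝ, (0:ℝ) < (c * x) ^ 2 + γ := fun x => by positivity
  refine ⟨?_, ?_, ?_, ?_, ?_⟩
  · -- smoothness
    have hinner : ContDiff ℝ (⊤ : ℕ∞) (fun x : ℝ => 4 * c / ((c * x) ^ 2 + γ)) :=
      contDiff_const.div (((contDiff_const.mul contDiff_id).pow 2).add contDiff_const)
        (fun x => (hg x).ne')
    rw [contDiff_iff_contDiffAt]
    intro x
    exact (Real.contDiffAt_sqrt (by positivity : (0:ℝ) < 4 * c / ((c * x) ^ 2 + γ)).ne').comp x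
      hinner.contDiffAt
  · intro x
    exact Real.sqrt_pos.mpr (by positivity)
  · intro x
    simp [PhiA, mul_neg, neg_sq]
  · -- decay
    have h1 : Tendsto (fun x : ℝ => (c * x) ^ 2 + γ) (cocompact ℝ) atTop := by
      apply tendsto_atTop_add_const_right
      have : Tendsto (fun x : ℝ => (c * x) ^ 2) (cocompact ℝ) atTop := by
        have h2 : Tendsto (fun x : ℝ => c ^ 2 * x ^ 2) (cocompact ℝ) atTop := by
          apply Tendsto.const_mul_atTop (by positivity : (0:ℝ) < c ^ 2)
          have : Tendsto (fun x : ℝ => ‖x‖ ^ 2) (cocompact ℝ) atTop :=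
            (tendsto_pow_atTop (by norm_num)).comp tendsto_norm_cocompact_atTop
          simpa [sq_abs] using this
        simpa [mul_pow] using h2
      exact this
    have h2 : Tendsto (fun x : ℝ => 4 * c / ((c * x) ^ 2 + γ)) (cocompact ℝ) (nhds 0) :=
      tendsto_const_nhds.div_atTop h1
    have := (Real.continuous_sqrt.tendsto 0).comp h2
    simpa [PhiA, Function.comp_def] using this
  · -- ODE
    intro x
    have hd1 : deriv (fun y => PhiA γ c y)
        = fun x => -(Real.sqrt (4 * c) * c ^ 2 * x) / (Real.sqrt ((c * x) ^ 2 + γ)) ^ 3 :=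
      funext fun x => (phiA_deriv1 γ c hγ0 hc0.le x).deriv
    have hd2 : deriv (deriv (fun y => PhiA γ c y)) x
        = -(Real.sqrt (4 * c) * c ^ 2) / (Real.sqrt ((c * x) ^ 2 + γ)) ^ 3
          + 3 * Real.sqrt (4 * c) * c ^ 4 * x ^ 2 / (Real.sqrt ((c * x) ^ 2 + γ)) ^ 5 := by
      rw [hd1]; exact (phiA_deriv2 γ c hγ0 x).deriv
    rw [hd2]
    have hgx := hg x
    have hS : Real.sqrt ((c * x) ^ 2 + γ) ≠ 0 := Real.sqrt_ne_zero'.mpr hgx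
    have hS2 : Real.sqrt ((c * x) ^ 2 + γ) ^ 2 = (c * x) ^ 2 + γ := Real.sq_sqrt hgx.le
    have hA2 : Real.sqrt (4 * c) ^ 2 = 4 * c := Real.sq_sqrt (by positivity)
    have hPhi : PhiA γ c x = Real.sqrt (4 * c) * (Real.sqrt ((c * x) ^ 2 + γ))⁻¹ :=
      congrFun (phiA_eq γ c hc0.le) x
    rw [hPhi]
    set S := Real.sqrt ((c * x) ^ 2 + γ) with hSdef
    set A := Real.sqrt (4 * c) with hAdef
    field_simp
    linear_combination (16*A*c*S^2 - 6*γ*A*(A^2+4*c)) * hA2 + (96*A*c^2) * hS2
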